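/- Let V be an (n+1)-dimensional real vector space, J : V → V linear with ker J ⊇ span(ξ), ξ ≠ 0, and suppose Λⁿ J ≠ 0, so that Λⁿ J = τ ⊗ W for some nonzero n-form τ ∈ (ΛⁿV)* and nonzero n-vector W ∈ ΛⁿV, with trace(Λⁿ J) = τ(W). If additionally V carries a nondegenerate symmetric bilinear form g making J g-self-adjoint, and τ(W) = 0, then g(ξ, ξ) = 0. -/

import Mathlib

open ExteriorAlgebra Module

section aux
variable {V : Type*} [AddCommGroup V] [Module ℝ V] [FiniteDimensional ℝ V]

lemma aux_nzsd {V : Type*} [AddCommGroup V] [Module ℝ V] :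
    NoZeroSMulDivisors ℝ (ExteriorAlgebra ℝ V) := by
  constructor
  intro c x h
  rcases eq_or_ne c 0 with rfl | hc
  · exact Or.inl rfl
  · right
    have h2 := congrArg (fun y => c⁻¹ • y) h
    simpa [smul_smul, inv_mul_cancel₀ hc] using h2

lemma aux_iMulti_ne_zero {n : ℕ} {v : Fin n → V} (hv : LinearIndependent ℝ v) :
    ExteriorAlgebra.ιMulti ℝ n v ≠ 0 := by
  classical
  have hf : ∀ i : Fin n, ∃ f : V →ₗ[ℝ] ℝ, ∀ j, f (v j) = if j = i then 1 else 0 := by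
    intro i
    obtain ⟨f, hf⟩ := LinearMap.exists_extend ((Basis.span hv).coord i)
    refine ⟨f, fun j => ?_⟩
    have h1 : ((Basis.span hv) j : V) = v j := congrArg Subtype.val (Basis.span_apply hv j)
    have h2 : f (v j) = (Basis.span hv).coord i ((Basis.span hv) j) := by
      rw [← hf]
      simp only [LinearMap.comp_apply, Submodule.subtype_apply, h1]
    rw [h2, Basis.coord_apply, Basis.repr_self, Finsupp.single_apply]
  choose f hfd using hf
  set φ : V [⋀^Fin n]→ₗ[ℝ] ℝ :=
    (Matrix.detRowAlternating (R := ℝ) (n := Fin n)).compLinearMap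
      (LinearMap.pi fun i => f i) with hφ
  have hφv : φ v = 1 := by
    have harg : (fun i => (LinearMap.pi fun k => f k) (v i))
        = (1 : Matrix (Fin n) (Fin n) ℝ) := by
      funext i j
      simp only [LinearMap.pi_apply, Matrix.one_apply]
      rw [hfd j i]
    show Matrix.detRowAlternating (fun i => (LinearMap.pi fun k => f k) (v i)) = 1
    rw [harg]
    exact Matrix.det_one
  intro h0
  have := ExteriorAlgebra.liftAlternating_apply_ιMulti
    (R := ℝ) (M := V) (N := ℝ)
    (Function.update (fun k => (0 : V [⋀^Fin k]→ₗ[ℝ] ℝ)) n φ) v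
  rw [h0, map_zero, Function.update_self, hφv] at this
  exact one_ne_zero this.symm

lemma aux_rank_lt_vanish {n : ℕ} {f : V →ₗ[ℝ] V}
    (h : finrank ℝ (LinearMap.range f) < n) :
    ∀ x ∈ ⋀[ℝ]^n V, ExteriorAlgebra.map f x = 0 := by
  intro x hx
  rw [← ExteriorAlgebra.ιMulti_span_fixedDegree] at hx
  induction hx using Submodule.span_induction with
  | mem y hy =>
    obtain ⟨v, rfl⟩ := hy
    rw [ExteriorAlgebra.map_apply_ιMulti]
    haveI := aux_nzsd (V := V)
    apply AlternatingMap.map_linearDependent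
    intro hli
    have h1 : Submodule.span ℝ (Set.range (f ∘ v)) ≤ LinearMap.range f := by
      rw [Submodule.span_le]; rintro _ ⟨i, rfl⟩; exact ⟨v i, rfl⟩
    have h2 := Submodule.finrank_mono h1
    rw [finrank_span_eq_card hli, Fintype.card_fin] at h2
    omega
  | zero => simp
  | add y z _ _ hy hz => rw [map_add, hy, hz, add_zero]
  | smul c y _ hy => rw [map_smul, hy, smul_zero]

lemma aux_exists_wedge_ne {n : ℕ} {f : V →ₗ[ℝ] V}
    (h : n ≤ finrank ℝ (LinearMap.range f)) :
    ∃ x ∈ ⋀[ℝ]^n V, ExteriorAlgebra.map f x ≠ 0 := by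
  let b := finBasis ℝ (LinearMap.range f)
  let u : Fin n → V := fun i => (b (Fin.castLE h i) : V)
  have hu : LinearIndependent ℝ u := by
    have h1 := b.linearIndependent.comp (Fin.castLE h) (Fin.castLE_injective h)
    exact h1.map' (LinearMap.range f).subtype (Submodule.ker_subtype _)
  have hmem : ∀ i, u i ∈ LinearMap.range f := fun i => (b (Fin.castLE h i)).2
  choose v hv using hmem
  refine ⟨ExteriorAlgebra.ιMulti ℝ n v, ExteriorAlgebra.ιMulti_range ℝ n ⟨v, rfl⟩, ?_⟩
  rw [ExteriorAlgebra.map_apply_ιMulti]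
  have hfv : f ∘ v = u := funext hv
  rw [hfv]
  exact aux_iMulti_ne_zero hu

end aux

/-- Let `J` kill `ξ ≠ 0` on an `(n+1)`-dimensional space, with `Λⁿ J ≠ 0` written
as the rank-one operator `τ ⊗ W` on `⋀ⁿ V` (so `trace(Λⁿ J) = τ(W)`).  If `V`
carries a nondegenerate symmetric bilinear form `g` making `J` self-adjoint and
`τ(W) = 0`, then `ξ` is isotropic: `g(ξ, ξ) = 0`. -/
theorem stmt12 (n : ℕ) (V : Type*) [AddCommGroup V] [Module ℝ V] [FiniteDimensional ℝ V]
    (hdim : Module.finrank ℝ V = n + 1)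
    (J : V →ₗ[ℝ] V) (ξ : V) (hξ : ξ ≠ 0) (hJξ : J ξ = 0)
    (g : V →ₗ[ℝ] V →ₗ[ℝ] ℝ) (hgsym : ∀ x y, g x y = g y x)
    (hgnd : ∀ x, (∀ y, g x y = 0) → x = 0)
    (hsa : ∀ x y, g (J x) y = g x (J y))
    (τ : (⋀[ℝ]^n V) →ₗ[ℝ] ℝ) (W : ⋀[ℝ]^n V) (hτ : τ ≠ 0) (hW : W ≠ 0)
    (hrep : ∀ x : ⋀[ℝ]^n V,
      ExteriorAlgebra.map J (x : ExteriorAlgebra ℝ V) = τ x • (W : ExteriorAlgebra ℝ V))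
    (htr : τ W = 0) :
    g ξ ξ = 0 := by
  classical
  have hWc : (W : ExteriorAlgebra ℝ V) ≠ 0 := by
    simpa using hW
  -- n ≤ rank J
  have hrkJ : n ≤ finrank ℝ (LinearMap.range J) := by
    by_contra h
    push_neg at h
    obtain ⟨x, hx⟩ := DFunLike.ne_iff.mp hτ
    have h1 := aux_rank_lt_vanish h (x : ExteriorAlgebra ℝ V) x.2
    rw [hrep x] at h1
    haveI := aux_nzsd (V := V)
    rcases smul_eq_zero.mp h1 with h2 | h2
    · exact hx h2
    · exact hWc h2
  have hker1 : Submodule.span ℝ {ξ} ≤ LinearMap.ker J := by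
    rw [Submodule.span_singleton_le_iff_mem]
    exact LinearMap.mem_ker.mpr hJξ
  have hsp : finrank ℝ (Submodule.span ℝ {ξ} : Submodule ℝ V) = 1 :=
    finrank_span_singleton hξ
  have hkerge : 1 ≤ finrank ℝ (LinearMap.ker J) := hsp ▸ Submodule.finrank_mono hker1
  have hrn := LinearMap.finrank_range_add_finrank_ker J
  rw [hdim] at hrn
  have hker1' : finrank ℝ (LinearMap.ker J) = 1 := by omega
  have hkereq : Submodule.span ℝ {ξ} = LinearMap.ker J :=
    Submodule.eq_of_le_of_finrank_eq hker1 (by rw [hsp, hker1'])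
  -- Λⁿ (J∘J) = 0
  have hvan : ∀ x ∈ ⋀[ℝ]^n V, ExteriorAlgebra.map (J ∘ₗ J) x = 0 := by
    intro x hx
    have h1 : ExteriorAlgebra.map (J ∘ₗ J) x
        = ExteriorAlgebra.map J (ExteriorAlgebra.map J x) := by
      rw [← ExteriorAlgebra.map_comp_map]; rfl
    rw [h1, hrep ⟨x, hx⟩, map_smul, hrep W, htr, zero_smul, smul_zero]
  have hrk2 : finrank ℝ (LinearMap.range (J ∘ₗ J)) < n := by
    by_contra h
    push_neg at h
    obtain ⟨x, hx, hne⟩ := aux_exists_wedge_ne h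
    exact hne (hvan x hx)
  have hsub : LinearMap.ker J ≤ LinearMap.ker (J ∘ₗ J) := by
    intro x hx
    simp [LinearMap.mem_ker, LinearMap.mem_ker.mp hx]
  have hrn2 := LinearMap.finrank_range_add_finrank_ker (J ∘ₗ J)
  rw [hdim] at hrn2
  have hne : LinearMap.ker J ≠ LinearMap.ker (J ∘ₗ J) := by
    intro h
    rw [h] at hker1'
    omega
  obtain ⟨η, hη2, hη1⟩ := SetLike.exists_of_lt (hsub.lt_of_ne hne)
  have hJJη : J (J η) = 0 := LinearMap.mem_ker.mp hη2
  have hJη : J η ≠ 0 := fun h => hη1 (LinearMap.mem_ker.mpr h)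
  have hmem : J η ∈ Submodule.span ℝ {ξ} := by
    rw [hkereq]
    exact LinearMap.mem_ker.mpr hJJη
  obtain ⟨c, hc⟩ := Submodule.mem_span_singleton.mp hmem
  have hc0 : c ≠ 0 := by
    rintro rfl
    rw [zero_smul] at hc
    exact hJη hc.symm
  have key : g (J η) (J η) = 0 := by
    rw [hsa, hJJη, map_zero]
  rw [← hc] at key
  simp only [map_smul, LinearMap.smul_apply, smul_eq_mul] at key
  rcases mul_eq_zero.mp key with h | h
  · exact absurd h hc0
  rcases mul_eq_zero.mp h with h' | h'
  · exact absurd h' hc0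
  · exact h'
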